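/- Let N users each hold a vector xi ∈ R^m with entries in [r1, r2], each partitioned into G equal segments, where the l-th segment of user i is quantized with K_i^l levels (quantization interval (r2−r1)/(K_i^l−1)), independently across all coordinates and users. Then E[‖(1/N)∑ x̄i − (1/N)∑ xi‖²] ≤ ((r2−r1)²/(4N²))·(m/G)·∑_{i=1}^{N} ∑_{l=0}^{G−1} 1/(K_i^l−1)². -/

import Mathlib

open MeasureTheory ProbabilityTheory Finset

lemma sum_sq_integral_of_indep {Ω : Type*} [MeasureSpace Ω]
    (hP : IsProbabilityMeasure (ℙ : Measure Ω)) {n : ℕ} (f : Fin n → Ω → ℝ)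
    (hmeas : ∀ i, Measurable (f i))
    (hsq : ∀ i, Integrable (fun ω => f i ω ^ 2) ℙ)
    (hmean : ∀ i, ∫ ω, f i ω ∂ℙ = 0)
    (hindep : ∀ i j, i ≠ j → IndepFun (f i) (f j) ℙ) :
    ∫ ω, (∑ i, f i ω) ^ 2 ∂ℙ = ∑ i, ∫ ω, f i ω ^ 2 ∂ℙ := by
  have hL2 : ∀ i, MemLp (f i) 2 ℙ := fun i =>
    (memLp_two_iff_integrable_sq (hmeas i).aestronglyMeasurable).2 (hsq i)
  have hint1 : ∀ i, Integrable (f i) ℙ := fun i => (hL2 i).integrable one_le_two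
  have hprod : ∀ i j, Integrable (fun ω => f i ω * f j ω) ℙ := by
    intro i j
    rcases eq_or_ne i j with rfl | hij
    · simpa [pow_two] using hsq i
    · exact (hindep i j hij).integrable_mul (hint1 i) (hint1 j)
  calc ∫ ω, (∑ i, f i ω) ^ 2 ∂ℙ
      = ∫ ω, ∑ i, ∑ j, f i ω * f j ω ∂ℙ := by
        congr 1; ext ω; rw [pow_two, Finset.sum_mul_sum]
    _ = ∑ i, ∑ j, ∫ ω, f i ω * f j ω ∂ℙ := by
        rw [integral_finset_sum _ (fun i _ => integrable_finset_sum _ (fun j _ => hprod i j))]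
        exact Finset.sum_congr rfl fun i _ => integral_finset_sum _ (fun j _ => hprod i j)
    _ = ∑ i, ∫ ω, f i ω ^ 2 ∂ℙ := by
        refine Finset.sum_congr rfl fun i _ => ?_
        rw [Finset.sum_eq_single i]
        · simp [pow_two]
        · intro j _ hji
          have h := (hindep i j (Ne.symm hji)).integral_mul_eq_mul_integral (hint1 i).aestronglyMeasurable (hint1 j).aestronglyMeasurable
          rw [hmean i, zero_mul] at h
          exact h
        · simp

/-- `N` users hold vectors `x i ∈ [r1,r2]^m`, each partitioned into `G` equal segments
(coordinate `k` lies in segment `seg k`, each segment of size `m/G`); the `l`-th segment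
of user `i` is quantized with a `K i l`-level unbiased stochastic quantizer
(quantization interval `(r2−r1)/(K i l − 1)`), independently across all coordinates and
users. Then
`E‖(1/N)∑ x̄ i − (1/N)∑ x i‖² ≤ ((r2−r1)²/(4N²)) (m/G) ∑_i ∑_l 1/(K i l − 1)²`. -/
theorem heterosag_aggregate_error {Ω : Type*} [MeasureSpace Ω]
    (hP : IsProbabilityMeasure (ℙ : Measure Ω)) (m G N : ℕ)
    (hG : 1 ≤ G) (hN : 1 ≤ N) (hdvd : G ∣ m)
    (seg : Fin m → Fin G)
    (hseg : ∀ l : Fin G, (univ.filter (fun k => seg k = l)).card = m / G)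
    (r1 r2 : ℝ) (hr : r1 < r2)
    (K : Fin N → Fin G → ℕ) (hK : ∀ i l, 2 ≤ K i l)
    (x : Fin N → Fin m → ℝ) (hx : ∀ i k, r1 ≤ x i k ∧ x i k ≤ r2)
    (xq : Ω → Fin N → Fin m → ℝ)
    (hmeas : ∀ i k, Measurable (fun ω => xq ω i k))
    (hind : iIndepFun (fun (p : Fin N × Fin m) ω => xq ω p.1 p.2) ℙ)
    (hint : ∀ i k, Integrable (fun ω => (xq ω i k - x i k) ^ 2) ℙ)
    (hunb : ∀ i k, ∫ ω, xq ω i k ∂ℙ = x i k)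
    (hvar : ∀ i k, ∫ ω, (xq ω i k - x i k) ^ 2 ∂ℙ
      ≤ ((r2 - r1) / ((K i (seg k) : ℝ) - 1)) ^ 2 / 4) :
    ∫ ω, ∑ k, ((N : ℝ)⁻¹ * ∑ i, xq ω i k - (N : ℝ)⁻¹ * ∑ i, x i k) ^ 2 ∂ℙ
      ≤ ((r2 - r1) ^ 2 / (4 * (N : ℝ) ^ 2)) * ((m : ℝ) / G) *
        ∑ i, ∑ l, 1 / ((K i l : ℝ) - 1) ^ 2 := by
  set e : Fin N → Fin m → Ω → ℝ := fun i k ω => xq ω i k - x i k with he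
  have hemeas : ∀ i k, Measurable (e i k) := fun i k => (hmeas i k).sub measurable_const
  have heL2 : ∀ i k, MemLp (e i k) 2 ℙ := fun i k =>
    (memLp_two_iff_integrable_sq (hemeas i k).aestronglyMeasurable).2 (hint i k)
  have heint : ∀ i k, Integrable (e i k) ℙ := fun i k => (heL2 i k).integrable one_le_two
  have hemean : ∀ i k, ∫ ω, e i k ω ∂ℙ = 0 := by
    intro i k
    have hxqint : Integrable (fun ω => xq ω i k) ℙ := by
      have h := (heint i k).add (integrable_const (x i k))
      have heq : (fun ω => xq ω i k) = e i k + fun _ => x i k := by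
        funext ω; simp [he]
      rw [heq]; exact h
    rw [he]
    simp only
    rw [integral_sub hxqint (integrable_const _), hunb, integral_const]
    simp
  have heindep : ∀ k (i j : Fin N), i ≠ j → IndepFun (e i k) (e j k) ℙ := by
    intro k i j hij
    have h := hind.indepFun (show ((i, k) : Fin N × Fin m) ≠ (j, k) by simp [hij])
    exact h.comp (measurable_id.sub_const (x i k)) (measurable_id.sub_const (x j k))
  have hNpos : (0 : ℝ) < N := by positivity
  have hrw : ∀ (k : Fin m) (ω : Ω), ((N : ℝ)⁻¹ * ∑ i, xq ω i k - (N : ℝ)⁻¹ * ∑ i, x i k) ^ 2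
      = ((N : ℝ) ^ 2)⁻¹ * (∑ i, e i k ω) ^ 2 := by
    intro k ω
    rw [← mul_sub, ← Finset.sum_sub_distrib, mul_pow]
    simp [he, inv_pow]
  -- per-coordinate computation
  have key : ∀ k : Fin m,
      ∫ ω, ((N : ℝ)⁻¹ * ∑ i, xq ω i k - (N : ℝ)⁻¹ * ∑ i, x i k) ^ 2 ∂ℙ
        = ((N : ℝ) ^ 2)⁻¹ * ∑ i, ∫ ω, (e i k ω) ^ 2 ∂ℙ := by
    intro k
    simp only [hrw k]
    rw [integral_const_mul, sum_sq_integral_of_indep hP (fun i => e i k)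
      (fun i => hemeas i k) (fun i => hint i k) (fun i => hemean i k) (heindep k)]
  -- integrability of each k-summand
  have hintk : ∀ k : Fin m, Integrable
      (fun ω => ((N : ℝ)⁻¹ * ∑ i, xq ω i k - (N : ℝ)⁻¹ * ∑ i, x i k) ^ 2) ℙ := by
    intro k
    have : Integrable (fun ω => ((N : ℝ) ^ 2)⁻¹ * (∑ i, e i k ω) ^ 2) ℙ := by
      refine Integrable.const_mul ?_ _
      have h2 := memLp_finset_sum' (μ := ℙ) univ (fun i (_ : i ∈ univ) => heL2 i k)
      have h2' : MemLp (fun ω => ∑ i, e i k ω) 2 ℙ := by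
        have heq : (fun ω => ∑ i, e i k ω) = ∑ i : Fin N, e i k := by
          funext ω; exact (Finset.sum_apply ω univ fun i => e i k).symm
        rw [heq]; exact h2
      exact (memLp_two_iff_integrable_sq h2'.aestronglyMeasurable).1 h2'
    exact this.congr (Filter.Eventually.of_forall fun ω => (hrw k ω).symm)
  rw [integral_finset_sum _ (fun k _ => hintk k)]
  have step1 : ∑ k, ∫ ω, ((N : ℝ)⁻¹ * ∑ i, xq ω i k - (N : ℝ)⁻¹ * ∑ i, x i k) ^ 2 ∂ℙ
      ≤ ∑ k : Fin m, ((N : ℝ) ^ 2)⁻¹ * ∑ i, ((r2 - r1) / ((K i (seg k) : ℝ) - 1)) ^ 2 / 4 := by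
    refine Finset.sum_le_sum fun k _ => ?_
    rw [key k]
    refine mul_le_mul_of_nonneg_left (Finset.sum_le_sum fun i _ => ?_) (by positivity)
    exact hvar i k
  refine le_trans step1 ?_
  -- now pure algebra + counting
  have hKne : ∀ i l, ((K i l : ℝ) - 1) ≠ 0 := by
    intro i l
    have : (2 : ℝ) ≤ (K i l : ℝ) := by exact_mod_cast hK i l
    linarith
  have hcount : ∑ k : Fin m, ∑ i, ((r2 - r1) / ((K i (seg k) : ℝ) - 1)) ^ 2 / 4
      = ∑ i, ∑ l, ((m : ℝ) / G) * (((r2 - r1) / ((K i l : ℝ) - 1)) ^ 2 / 4) := by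
    rw [Finset.sum_comm]
    refine Finset.sum_congr rfl fun i _ => ?_
    rw [← Finset.sum_fiberwise (g := seg) (f := fun k => ((r2 - r1) / ((K i (seg k) : ℝ) - 1)) ^ 2 / 4)]
    refine Finset.sum_congr rfl fun l _ => ?_
    have : ∀ k ∈ univ.filter (fun k => seg k = l),
        ((r2 - r1) / ((K i (seg k) : ℝ) - 1)) ^ 2 / 4
          = ((r2 - r1) / ((K i l : ℝ) - 1)) ^ 2 / 4 := by
      intro k hk
      rw [mem_filter] at hk
      rw [hk.2]
    rw [Finset.sum_congr rfl this, Finset.sum_const, hseg l, nsmul_eq_mul]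
    congr 1
    rw [Nat.cast_div hdvd]
    exact_mod_cast (Nat.one_le_iff_ne_zero.mp hG : G ≠ 0) ∘ Nat.cast_eq_zero.mp
  refine le_of_eq ?_
  rw [← Finset.mul_sum, hcount]
  simp only [Finset.mul_sum]
  refine Finset.sum_congr rfl fun i _ => Finset.sum_congr rfl fun l _ => ?_
  have h := hKne i l
  have hN' : (N : ℝ) ≠ 0 := ne_of_gt hNpos
  field_simp
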